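/- For every nonzero vector z = (z₁,z₂,z₃,z₄) in ℝ⁴, the 4×4 matrix with rows (z₁, −z₂, z₃, z₄), (z₂, z₁, −z₄, z₃), (z₃, −z₄, −z₁, −z₂), (z₄, z₃, z₂, −z₁) is invertible; indeed its columns are pairwise orthogonal, each of norm |z|. -/

import Mathlib

open Matrix

/-- For every nonzero z ∈ ℝ⁴ the indicated 4×4 matrix is invertible;
its columns are pairwise orthogonal, each of norm |z| (i.e. Mᵀ M = ‖z‖² I). -/
theorem stmt_5 (z : EuclideanSpace ℝ (Fin 4)) (hz : z ≠ 0) :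
    let M : Matrix (Fin 4) (Fin 4) ℝ :=
      !![z 0, -z 1,  z 2,  z 3;
         z 1,  z 0, -z 3,  z 2;
         z 2, -z 3, -z 0, -z 1;
         z 3,  z 2,  z 1, -z 0]
    IsUnit M.det ∧ Mᵀ * M = (‖z‖ ^ 2) • (1 : Matrix (Fin 4) (Fin 4) ℝ) := by
  intro M
  have hn : ‖z‖ ^ 2 = z 0 ^ 2 + z 1 ^ 2 + z 2 ^ 2 + z 3 ^ 2 := by
    rw [EuclideanSpace.norm_eq, Real.sq_sqrt (by positivity)]
    simp [Fin.sum_univ_four, sq_abs]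
  have hzpos : (0:ℝ) < ‖z‖ := norm_pos_iff.mpr hz
  have hpos : (0:ℝ) < ‖z‖ ^ 2 := by positivity
  have hdet : M.det ≠ 0 := by
    have : M.det = (‖z‖ ^ 2) ^ 2 := by
      rw [hn]
      simp only [M]
      simp [Matrix.det_succ_row_zero, Fin.sum_univ_succ, Fin.succAbove, Fin.castSucc,
        Fin.castAdd, Fin.castLE]
      ring
    rw [this]
    positivity
  refine ⟨isUnit_iff_ne_zero.mpr hdet, ?_⟩
  have hT : Mᵀ = !![z 0,  z 1,  z 2,  z 3;
                    -z 1, z 0, -z 3,  z 2;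
                    z 2, -z 3, -z 0,  z 1;
                    z 3,  z 2, -z 1, -z 0] := by
    ext i j
    fin_cases i <;> fin_cases j <;> simp [M, Matrix.transpose_apply]
  rw [hT]
  ext i j
  fin_cases i <;> fin_cases j <;>
    simp [M, Matrix.mul_apply, Fin.sum_univ_four, hn] <;> ring
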